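/- Let μ be a probability measure on a Polish space X and let p, q, q̂ be Markov kernels on X with stationary probability measures μ and μ̂ respectively (μq = μ, μ̂q̂ = μ̂). Suppose ε ∈ (0,1), set μ_ε = ε μ̂ + (1−ε) μ, let f_ε = dμ/dμ_ε and f̂_ε = dμ̂/dμ_ε (which exist since μ, μ̂ ≪ μ_ε), and define the kernel q_ε(x,·) = ε f̂_ε(x) q̂(x,·) + (1−ε) f_ε(x) q(x,·). Then μ_ε q_ε = μ_ε, and moreover H(μ_ε × q_ε | μ_ε × p) ≤ ε H(μ̂ × q̂ | μ̂ × p) + (1−ε) H(μ × q | μ × p). -/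

import Mathlib

open MeasureTheory ProbabilityTheory
open scoped ENNReal MeasureTheory

-- Relative entropy `H(α|β) = ∫ log (dα/dβ) dα` if `α ≪ β`, and `+∞` otherwise.
open Classical in
noncomputable def relEnt {X : Type*} [MeasurableSpace X] (α β : Measure X) : EReal :=
  if α ≪ β then ((∫ x, Real.log ((α.rnDeriv β x).toReal) ∂α : ℝ) : EReal) else ⊤


section Aux

open Real

variable {Y : Type*} [MeasurableSpace Y]

lemma aux_mul_neg_log_le_one {t : ℝ} (ht : 0 ≤ t) : t * (-Real.log t) ≤ 1 := by
  rcases eq_or_lt_of_le ht with h | h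
  · simp [← h]
  · have h2 : -Real.log t = Real.log t⁻¹ := (Real.log_inv t).symm
    have h3 : Real.log t⁻¹ ≤ t⁻¹ - 1 := Real.log_le_sub_one_of_pos (inv_pos.2 h)
    have := mul_le_mul_of_nonneg_left (h2 ▸ h3 : -Real.log t ≤ t⁻¹ - 1) ht
    have h4 : t * (t⁻¹ - 1) = 1 - t := by field_simp
    nlinarith

lemma aux_ennreal_neglog (x : ℝ≥0∞) :
    x * ENNReal.ofReal (-Real.log x.toReal) ≤ 1 := by
  rcases eq_or_ne x ∞ with rfl | hx
  · simp [Real.log_zero]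
  · calc x * ENNReal.ofReal (-Real.log x.toReal)
        = ENNReal.ofReal x.toReal * ENNReal.ofReal (-Real.log x.toReal) := by
          rw [ENNReal.ofReal_toReal hx]
      _ = ENNReal.ofReal (x.toReal * (-Real.log x.toReal)) :=
          (ENNReal.ofReal_mul ENNReal.toReal_nonneg).symm
      _ ≤ ENNReal.ofReal 1 := ENNReal.ofReal_le_ofReal (aux_mul_neg_log_le_one ENNReal.toReal_nonneg)
      _ = 1 := ENNReal.ofReal_one

lemma aux_ennreal_inv (x : ℝ≥0∞) :
    x * ENNReal.ofReal (x.toReal)⁻¹ ≤ 1 := by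
  rcases eq_or_ne x ∞ with rfl | hx
  · simp
  · calc x * ENNReal.ofReal (x.toReal)⁻¹
        = ENNReal.ofReal x.toReal * ENNReal.ofReal (x.toReal)⁻¹ := by
          rw [ENNReal.ofReal_toReal hx]
      _ = ENNReal.ofReal (x.toReal * (x.toReal)⁻¹) :=
          (ENNReal.ofReal_mul ENNReal.toReal_nonneg).symm
      _ ≤ ENNReal.ofReal 1 := by
          apply ENNReal.ofReal_le_ofReal
          rcases eq_or_ne x.toReal 0 with h | h
          · simp [h]
          · rw [mul_inv_cancel₀ h]
      _ = 1 := ENNReal.ofReal_one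

lemma measurable_log_rnDeriv {Y : Type*} [MeasurableSpace Y] (α β : Measure Y) :
    Measurable fun y => Real.log ((α.rnDeriv β y).toReal) :=
  (Measure.measurable_rnDeriv α β).ennreal_toReal.log

lemma ennnorm_real (x : ℝ) : (‖x‖₊ : ℝ≥0∞) = ENNReal.ofReal x + ENNReal.ofReal (-x) := by
  rw [← enorm_eq_nnnorm, Real.enorm_eq_ofReal_abs]
  rcases le_or_gt 0 x with h | h
  · rw [abs_of_nonneg h, ENNReal.ofReal_of_nonpos (neg_nonpos.2 h), add_zero]
  · rw [abs_of_neg h, ENNReal.ofReal_of_nonpos h.le, zero_add]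

/-- The negative part of `log (dα/dβ)` has finite integral w.r.t. `α`. -/
lemma negpart_ne_top (α β : Measure Y) [IsFiniteMeasure α] [IsFiniteMeasure β] (h : α ≪ β) :
    ∫⁻ y, ENNReal.ofReal (-Real.log ((α.rnDeriv β y).toReal)) ∂α ≠ ∞ := by
  have hmeas : AEMeasurable (fun y => ENNReal.ofReal (-Real.log ((α.rnDeriv β y).toReal))) β :=
    ((measurable_log_rnDeriv α β).neg.ennreal_ofReal).aemeasurable
  rw [← lintegral_rnDeriv_mul h hmeas]
  have hb : ∫⁻ y, α.rnDeriv β y * ENNReal.ofReal (-Real.log ((α.rnDeriv β y).toReal)) ∂β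
      ≤ ∫⁻ _, 1 ∂β := lintegral_mono fun y => aux_ennreal_neglog _
  refine ne_of_lt (lt_of_le_of_lt hb ?_)
  simp [measure_lt_top]

lemma not_integrable_of_pos_top {α : Measure Y} {f : Y → ℝ}
    (hpos : ∫⁻ y, ENNReal.ofReal (f y) ∂α = ∞) : ¬ Integrable f α := by
  intro hint
  have h2 := hint.2
  rw [hasFiniteIntegral_iff_norm] at h2
  have h1 : ∫⁻ y, ENNReal.ofReal (f y) ∂α ≤ ∫⁻ y, ENNReal.ofReal ‖f y‖ ∂α :=
    lintegral_mono fun y => ENNReal.ofReal_le_ofReal (le_abs_self _)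
  rw [hpos, top_le_iff] at h1
  rw [h1] at h2
  exact lt_irrefl _ h2

lemma pos_top_of_not_integrable {α : Measure Y} {f : Y → ℝ} (hf : AEMeasurable f α)
    (hneg : ∫⁻ y, ENNReal.ofReal (-f y) ∂α ≠ ∞) (hnint : ¬ Integrable f α) :
    ∫⁻ y, ENNReal.ofReal (f y) ∂α = ∞ := by
  by_contra hpos
  apply hnint
  refine ⟨hf.aestronglyMeasurable, ?_⟩
  have : HasFiniteIntegral f α ↔ ∫⁻ y, (‖f y‖₊ : ℝ≥0∞) ∂α < ∞ := Iff.rfl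
  rw [this]
  simp_rw [ennnorm_real]
  rw [lintegral_add_left' hf.ennreal_ofReal]
  exact ENNReal.add_lt_top.2 ⟨lt_top_iff_ne_top.2 hpos, lt_top_iff_ne_top.2 hneg⟩

/-- Gibbs' inequality: the relative entropy integral between probability measures is ≥ 0,
including the junk-value case (integral of a non-integrable function is 0). -/
lemma integral_log_rnDeriv_nonneg (α β : Measure Y) [IsProbabilityMeasure α]
    [IsProbabilityMeasure β] (h : α ≪ β) :
    0 ≤ ∫ y, Real.log ((α.rnDeriv β y).toReal) ∂α := by
  by_cases hint : Integrable (fun y => Real.log ((α.rnDeriv β y).toReal)) α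
  swap
  · rw [integral_undef hint]
  have hinv_meas : Measurable fun y => ((α.rnDeriv β y).toReal)⁻¹ :=
    (Measure.measurable_rnDeriv α β).ennreal_toReal.inv
  have hinv_lint : ∫⁻ y, ENNReal.ofReal ((α.rnDeriv β y).toReal)⁻¹ ∂α ≤ 1 := by
    rw [← lintegral_rnDeriv_mul h hinv_meas.ennreal_ofReal.aemeasurable]
    calc ∫⁻ y, α.rnDeriv β y * ENNReal.ofReal ((α.rnDeriv β y).toReal)⁻¹ ∂β
        ≤ ∫⁻ _, 1 ∂β := lintegral_mono fun y => aux_ennreal_inv _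
      _ = 1 := by simp
  have hinv_int : Integrable (fun y => ((α.rnDeriv β y).toReal)⁻¹) α := by
    refine ⟨hinv_meas.aestronglyMeasurable, ?_⟩
    rw [hasFiniteIntegral_iff_ofReal (Filter.Eventually.of_forall fun y => by positivity)]
    exact lt_of_le_of_lt hinv_lint (by norm_num)
  have hint2 : Integrable (fun y => 1 - ((α.rnDeriv β y).toReal)⁻¹) α :=
    (integrable_const 1).sub hinv_int
  have hptwise : ∀ᵐ y ∂α, 1 - ((α.rnDeriv β y).toReal)⁻¹ ≤ Real.log ((α.rnDeriv β y).toReal) := by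
    filter_upwards [Measure.rnDeriv_pos h, h.ae_le (Measure.rnDeriv_lt_top α β)] with y h1 h2
    exact Real.one_sub_inv_le_log_of_pos (ENNReal.toReal_pos h1.ne' h2.ne)
  have hmono := integral_mono_ae hint2 hint hptwise
  refine le_trans ?_ hmono
  rw [integral_sub (integrable_const 1) hinv_int, integral_const]
  simp only [probReal_univ, ENNReal.toReal_one, smul_eq_mul, one_mul]
  have : ∫ y, ((α.rnDeriv β y).toReal)⁻¹ ∂α ≤ 1 := by
    rw [integral_eq_lintegral_of_nonneg_ae (Filter.Eventually.of_forall fun y => by positivity)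
      hinv_meas.aestronglyMeasurable]
    exact ENNReal.toReal_le_of_le_ofReal zero_le_one (by simpa using hinv_lint)
  linarith

lemma isFiniteMeasure_smul (ν : Measure Y) [IsFiniteMeasure ν] {c : ℝ≥0∞} (hc : c ≠ ∞) :
    IsFiniteMeasure (c • ν) := by
  constructor
  rw [Measure.smul_apply, smul_eq_mul]
  exact ENNReal.mul_lt_top hc.lt_top (measure_lt_top ν _)

lemma comp_ac (ν₁ ν₂ : Measure Y) {c d : ℝ≥0∞} (hc : c ≠ 0) : ν₁ ≪ c • ν₁ + d • ν₂ := by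
  intro s hs
  rw [Measure.add_apply, Measure.smul_apply, Measure.smul_apply, smul_eq_mul, smul_eq_mul,
    add_eq_zero] at hs
  rcases mul_eq_zero.1 hs.1 with h | h
  · exact absurd h hc
  · exact h

lemma mix_ac {α₁ α₂ β₁ β₂ : Measure Y} {c d : ℝ≥0∞} (h1 : α₁ ≪ β₁) (h2 : α₂ ≪ β₂) :
    (c • α₁ + d • α₂) ≪ (c • β₁ + d • β₂) := by
  intro s hs
  rw [Measure.add_apply, Measure.smul_apply, Measure.smul_apply, smul_eq_mul, smul_eq_mul,
    add_eq_zero] at hs ⊢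
  constructor
  · rcases mul_eq_zero.1 hs.1 with h | h
    · simp [h]
    · simp [h1 h]
  · rcases mul_eq_zero.1 hs.2 with h | h
    · simp [h]
    · simp [h2 h]

lemma rnDeriv_mix (ν₁ ν₂ ρ : Measure Y) [IsFiniteMeasure ν₁] [IsFiniteMeasure ν₂]
    [SigmaFinite ρ] {c d : ℝ≥0∞} (hc : c ≠ ∞) (hd : d ≠ ∞) :
    (c • ν₁ + d • ν₂).rnDeriv ρ
      =ᵐ[ρ] fun y => c * ν₁.rnDeriv ρ y + d * ν₂.rnDeriv ρ y := by
  haveI := isFiniteMeasure_smul ν₁ hc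
  haveI := isFiniteMeasure_smul ν₂ hd
  filter_upwards [Measure.rnDeriv_add' (c • ν₁) (d • ν₂) ρ,
    Measure.rnDeriv_smul_left_of_ne_top ν₁ ρ hc,
    Measure.rnDeriv_smul_left_of_ne_top ν₂ ρ hd] with y h1 h2 h3
  rw [h1, Pi.add_apply, h2, h3]
  simp [smul_eq_mul]

/-- If a component of the mixture has non-integrable log-density, so does the mixture,
provided the "cross term" `∫ log(1/(ε u₁)) dα₁` is finite. -/
lemma integrable_component
    (α₁ α₂ β₁ β₂ α β : Measure Y)
    [IsProbabilityMeasure α₁] [IsProbabilityMeasure α₂]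
    [IsProbabilityMeasure β₁] [IsProbabilityMeasure β₂]
    {ε : ℝ} (hε0 : 0 < ε) (hε1 : ε < 1)
    (hα : α = ENNReal.ofReal ε • α₁ + ENNReal.ofReal (1 - ε) • α₂)
    (hβ : β = ENNReal.ofReal ε • β₁ + ENNReal.ofReal (1 - ε) • β₂)
    (h1 : α₁ ≪ β₁) (h2 : α₂ ≪ β₂)
    (hS1 : ∫⁻ y, ENNReal.ofReal (-Real.log ((ENNReal.ofReal ε * β₁.rnDeriv β y).toReal)) ∂α₁ ≠ ∞)
    (hint : Integrable (fun y => Real.log ((α.rnDeriv β y).toReal)) α) :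
    Integrable (fun y => Real.log ((α₁.rnDeriv β₁ y).toReal)) α₁ := by
  set c : ℝ≥0∞ := ENNReal.ofReal ε with hc_def
  set d : ℝ≥0∞ := ENNReal.ofReal (1 - ε) with hd_def
  have hc0 : c ≠ 0 := by simp [hc_def, ENNReal.ofReal_eq_zero]; linarith
  have hc_top : c ≠ ∞ := ENNReal.ofReal_ne_top
  have hd_top : d ≠ ∞ := ENNReal.ofReal_ne_top
  haveI : IsFiniteMeasure α := by
    rw [hα]; haveI := isFiniteMeasure_smul α₁ hc_top; haveI := isFiniteMeasure_smul α₂ hd_top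
    infer_instance
  haveI : IsFiniteMeasure β := by
    rw [hβ]; haveI := isFiniteMeasure_smul β₁ hc_top; haveI := isFiniteMeasure_smul β₂ hd_top
    infer_instance
  have hβ1β : β₁ ≪ β := hβ ▸ comp_ac β₁ β₂ hc0
  have hα1β : α₁ ≪ β := h1.trans hβ1β
  have hαβ : α ≪ β := hα ▸ hβ ▸ mix_ac h1 h2
  by_contra hn
  -- positive part of component is infinite
  have hpos1 : ∫⁻ y, ENNReal.ofReal (Real.log ((α₁.rnDeriv β₁ y).toReal)) ∂α₁ = ∞ :=
    pos_top_of_not_integrable (measurable_log_rnDeriv α₁ β₁).aemeasurable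
      (negpart_ne_top α₁ β₁ h1) hn
  -- rnDeriv of the mixtures decompose
  have hmixα : α.rnDeriv β =ᵐ[β] fun y => c * α₁.rnDeriv β y + d * α₂.rnDeriv β y :=
    hα ▸ rnDeriv_mix α₁ α₂ β hc_top hd_top
  have hmixβ : ∀ᵐ y ∂β, c * β₁.rnDeriv β y + d * β₂.rnDeriv β y = 1 := by
    filter_upwards [(hβ ▸ rnDeriv_mix β₁ β₂ β hc_top hd_top :
      β.rnDeriv β =ᵐ[β] fun y => c * β₁.rnDeriv β y + d * β₂.rnDeriv β y),
      Measure.rnDeriv_self β] with y hy hy'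
    rw [← hy, hy']
  -- the pointwise bound
  have hae : ∀ᵐ y ∂α₁, ENNReal.ofReal (Real.log ((α₁.rnDeriv β₁ y).toReal))
      ≤ ENNReal.ofReal (Real.log ((α.rnDeriv β y).toReal))
        + ENNReal.ofReal (-Real.log ((c * β₁.rnDeriv β y).toReal)) := by
    filter_upwards [hα1β.ae_le hmixα, hα1β.ae_le (Measure.rnDeriv_mul_rnDeriv h1),
      hα1β.ae_le (Measure.rnDeriv_lt_top α β), hα1β.ae_le (Measure.rnDeriv_lt_top β₁ β),
      h1.ae_le (Measure.rnDeriv_pos hβ1β), Measure.rnDeriv_pos h1,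
      h1.ae_le (Measure.rnDeriv_lt_top α₁ β₁), hα1β.ae_le hmixβ]
      with y hw hmul hwtop hutop hupos hg1pos hg1top hsum1
    set u := β₁.rnDeriv β y
    set g1 := α₁.rnDeriv β₁ y
    set w := α.rnDeriv β y
    have hcu1 : c * u ≤ 1 := by rw [← hsum1]; exact le_self_add
    have hcu0 : c * u ≠ 0 := by
      simp only [ne_eq, mul_eq_zero, not_or]; exact ⟨hc0, hupos.ne'⟩
    have hcutop : c * u ≠ ∞ := ENNReal.mul_ne_top hc_top hutop.ne
    have hle : c * u * g1 ≤ w := by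
      calc c * u * g1 = c * (g1 * u) := by ring
        _ = c * α₁.rnDeriv β y := by rw [Pi.mul_apply] at hmul; rw [← hmul]
        _ ≤ c * α₁.rnDeriv β y + d * α₂.rnDeriv β y := le_self_add
        _ = w := hw.symm
    have hrle : (c * u).toReal * g1.toReal ≤ w.toReal := by
      rw [← ENNReal.toReal_mul]
      exact ENNReal.toReal_mono hwtop.ne hle
    have ht_pos : 0 < (c * u).toReal := ENNReal.toReal_pos hcu0 hcutop
    have hg1r_pos : 0 < g1.toReal := ENNReal.toReal_pos hg1pos.ne' hg1top.ne
    have hlog : Real.log (g1.toReal)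
        ≤ Real.log (w.toReal) + (-Real.log ((c * u).toReal)) := by
      have h1' : Real.log ((c * u).toReal * g1.toReal) ≤ Real.log (w.toReal) :=
        Real.log_le_log (by positivity) hrle
      rw [Real.log_mul ht_pos.ne' hg1r_pos.ne'] at h1'
      linarith
    calc ENNReal.ofReal (Real.log (g1.toReal))
        ≤ ENNReal.ofReal (Real.log (w.toReal) + (-Real.log ((c * u).toReal))) :=
          ENNReal.ofReal_le_ofReal hlog
      _ ≤ _ := ENNReal.ofReal_add_le
  -- integrate the bound
  have hsum : (∞ : ℝ≥0∞) ≤ ∫⁻ y, ENNReal.ofReal (Real.log ((α.rnDeriv β y).toReal)) ∂α₁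
      + ∫⁻ y, ENNReal.ofReal (-Real.log ((c * β₁.rnDeriv β y).toReal)) ∂α₁ := by
    rw [← hpos1, ← lintegral_add_left (measurable_log_rnDeriv α β).ennreal_ofReal]
    exact lintegral_mono_ae hae
  have hposα1 : ∫⁻ y, ENNReal.ofReal (Real.log ((α.rnDeriv β y).toReal)) ∂α₁ = ∞ := by
    by_contra h
    exact absurd (top_le_iff.1 hsum)
      (ENNReal.add_ne_top.2 ⟨h, hS1⟩)
  have htrans : ∀ {f : Y → ℝ≥0∞}, ∫⁻ y, f y ∂α₁ = ∞ → ∫⁻ y, f y ∂α = ∞ := by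
    intro f hf
    rw [hα, lintegral_add_measure, lintegral_smul_measure, lintegral_smul_measure, hf,
      smul_eq_mul, ENNReal.mul_top hc0]
    exact top_add _
  have hposα : ∫⁻ y, ENNReal.ofReal (Real.log ((α.rnDeriv β y).toReal)) ∂α = ∞ :=
    htrans hposα1
  exact not_integrable_of_pos_top hposα hint

lemma relEnt_mixture_le
    (α₁ α₂ β₁ β₂ α β : Measure Y)
    [IsProbabilityMeasure α₁] [IsProbabilityMeasure α₂]
    [IsProbabilityMeasure β₁] [IsProbabilityMeasure β₂]
    {ε : ℝ} (hε0 : 0 < ε) (hε1 : ε < 1)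
    (hα : α = ENNReal.ofReal ε • α₁ + ENNReal.ofReal (1 - ε) • α₂)
    (hβ : β = ENNReal.ofReal ε • β₁ + ENNReal.ofReal (1 - ε) • β₂)
    (h1 : α₁ ≪ β₁) (h2 : α₂ ≪ β₂)
    (hS1 : ∫⁻ y, ENNReal.ofReal (-Real.log ((ENNReal.ofReal ε * β₁.rnDeriv β y).toReal)) ∂α₁ ≠ ∞)
    (hS2 : ∫⁻ y, ENNReal.ofReal (-Real.log ((ENNReal.ofReal (1 - ε) * β₂.rnDeriv β y).toReal)) ∂α₂
      ≠ ∞) :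
    relEnt α β ≤ (ε : EReal) * relEnt α₁ β₁ + ((1 - ε : ℝ) : EReal) * relEnt α₂ β₂ := by
  have hε1' : 0 < 1 - ε := by linarith
  set a : ℝ≥0∞ := ENNReal.ofReal ε with ha_def
  set b : ℝ≥0∞ := ENNReal.ofReal (1 - ε) with hb_def
  have ha0 : a ≠ 0 := by simp [ha_def, ENNReal.ofReal_eq_zero]; linarith
  have hb0 : b ≠ 0 := by simp [hb_def, ENNReal.ofReal_eq_zero]; linarith
  have ha_top : a ≠ ∞ := ENNReal.ofReal_ne_top
  have hb_top : b ≠ ∞ := ENNReal.ofReal_ne_top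
  haveI : IsFiniteMeasure α := by
    rw [hα]; haveI := isFiniteMeasure_smul α₁ ha_top; haveI := isFiniteMeasure_smul α₂ hb_top
    infer_instance
  haveI : IsFiniteMeasure β := by
    rw [hβ]; haveI := isFiniteMeasure_smul β₁ ha_top; haveI := isFiniteMeasure_smul β₂ hb_top
    infer_instance
  have hβ1β : β₁ ≪ β := hβ ▸ comp_ac β₁ β₂ ha0
  have hβ2β : β₂ ≪ β := by
    rw [hβ, add_comm]; exact comp_ac β₂ β₁ hb0
  have hα1β : α₁ ≪ β := h1.trans hβ1β
  have hα2β : α₂ ≪ β := h2.trans hβ2β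
  have hαβ : α ≪ β := hα ▸ hβ ▸ mix_ac h1 h2
  unfold relEnt
  rw [if_pos hαβ, if_pos h1, if_pos h2, ← EReal.coe_mul, ← EReal.coe_mul, ← EReal.coe_add,
    EReal.coe_le_coe_iff]
  have hr1 : 0 ≤ ∫ y, Real.log ((α₁.rnDeriv β₁ y).toReal) ∂α₁ :=
    integral_log_rnDeriv_nonneg α₁ β₁ h1
  have hr2 : 0 ≤ ∫ y, Real.log ((α₂.rnDeriv β₂ y).toReal) ∂α₂ :=
    integral_log_rnDeriv_nonneg α₂ β₂ h2
  by_cases hint : Integrable (fun y => Real.log ((α.rnDeriv β y).toReal)) α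
  swap
  · rw [integral_undef hint]
    have := mul_nonneg hε0.le hr1
    have := mul_nonneg hε1'.le hr2
    linarith
  -- both components are integrable
  have hint1 : Integrable (fun y => Real.log ((α₁.rnDeriv β₁ y).toReal)) α₁ :=
    integrable_component α₁ α₂ β₁ β₂ α β hε0 hε1 hα hβ h1 h2 hS1 hint
  have hint2 : Integrable (fun y => Real.log ((α₂.rnDeriv β₂ y).toReal)) α₂ := by
    have hα' : α = ENNReal.ofReal (1 - ε) • α₂ + ENNReal.ofReal (1 - (1 - ε)) • α₁ := by
      rw [hα, add_comm]; norm_num; rfl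
    have hβ' : β = ENNReal.ofReal (1 - ε) • β₂ + ENNReal.ofReal (1 - (1 - ε)) • β₁ := by
      rw [hβ, add_comm]; norm_num; rfl
    exact integrable_component α₂ α₁ β₂ β₁ α β hε1' (by linarith) hα' hβ' h2 h1 hS2 hint
  -- move all three integrals to integrals over β
  have e0 : ∫ y, Real.log ((α.rnDeriv β y).toReal) ∂α
      = ∫ y, (α.rnDeriv β y).toReal • Real.log ((α.rnDeriv β y).toReal) ∂β :=
    (integral_rnDeriv_smul hαβ).symm
  have e1 : ∫ y, Real.log ((α₁.rnDeriv β₁ y).toReal) ∂α₁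
      = ∫ y, (β₁.rnDeriv β y).toReal •
          ((α₁.rnDeriv β₁ y).toReal • Real.log ((α₁.rnDeriv β₁ y).toReal)) ∂β := by
    rw [integral_rnDeriv_smul hβ1β, integral_rnDeriv_smul h1]
  have e2 : ∫ y, Real.log ((α₂.rnDeriv β₂ y).toReal) ∂α₂
      = ∫ y, (β₂.rnDeriv β y).toReal •
          ((α₂.rnDeriv β₂ y).toReal • Real.log ((α₂.rnDeriv β₂ y).toReal)) ∂β := by
    rw [integral_rnDeriv_smul hβ2β, integral_rnDeriv_smul h2]
  rw [e0, e1, e2]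
  -- integrability over β
  have hI : Integrable (fun y => (α.rnDeriv β y).toReal • Real.log ((α.rnDeriv β y).toReal)) β :=
    (integrable_rnDeriv_smul_iff hαβ).2 hint
  have hI1 : Integrable (fun y => (β₁.rnDeriv β y).toReal •
      ((α₁.rnDeriv β₁ y).toReal • Real.log ((α₁.rnDeriv β₁ y).toReal))) β :=
    (integrable_rnDeriv_smul_iff hβ1β).2 ((integrable_rnDeriv_smul_iff h1).2 hint1)
  have hI2 : Integrable (fun y => (β₂.rnDeriv β y).toReal •
      ((α₂.rnDeriv β₂ y).toReal • Real.log ((α₂.rnDeriv β₂ y).toReal))) β :=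
    (integrable_rnDeriv_smul_iff hβ2β).2 ((integrable_rnDeriv_smul_iff h2).2 hint2)
  -- rnDeriv decompositions
  have hmixα : α.rnDeriv β =ᵐ[β] fun y => a * α₁.rnDeriv β y + b * α₂.rnDeriv β y :=
    hα ▸ rnDeriv_mix α₁ α₂ β ha_top hb_top
  have hmixβ : ∀ᵐ y ∂β, a * β₁.rnDeriv β y + b * β₂.rnDeriv β y = 1 := by
    filter_upwards [(hβ ▸ rnDeriv_mix β₁ β₂ β ha_top hb_top :
      β.rnDeriv β =ᵐ[β] fun y => a * β₁.rnDeriv β y + b * β₂.rnDeriv β y),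
      Measure.rnDeriv_self β] with y hy hy'
    rw [← hy, hy']
  -- pointwise convexity bound
  have hae : ∀ᵐ y ∂β, (α.rnDeriv β y).toReal • Real.log ((α.rnDeriv β y).toReal)
      ≤ ε * ((β₁.rnDeriv β y).toReal •
          ((α₁.rnDeriv β₁ y).toReal • Real.log ((α₁.rnDeriv β₁ y).toReal)))
        + (1 - ε) * ((β₂.rnDeriv β y).toReal •
          ((α₂.rnDeriv β₂ y).toReal • Real.log ((α₂.rnDeriv β₂ y).toReal))) := by
    filter_upwards [hmixα, hmixβ, Measure.rnDeriv_mul_rnDeriv h1,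
      Measure.rnDeriv_mul_rnDeriv h2, Measure.rnDeriv_lt_top α₁ β, Measure.rnDeriv_lt_top α₂ β,
      Measure.rnDeriv_lt_top β₁ β, Measure.rnDeriv_lt_top β₂ β]
      with y hw hsum1 hmul1 hmul2 hw1top hw2top hu1top hu2top
    rw [Pi.mul_apply] at hmul1 hmul2
    set u1 := β₁.rnDeriv β y
    set u2 := β₂.rnDeriv β y
    set v1 := α₁.rnDeriv β₁ y
    set v2 := α₂.rnDeriv β₂ y
    have hfin1 : a * (v1 * u1) ≠ ∞ := by
      rw [hmul1]; exact ENNReal.mul_ne_top ha_top hw1top.ne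
    have hfin2 : b * (v2 * u2) ≠ ∞ := by
      rw [hmul2]; exact ENNReal.mul_ne_top hb_top hw2top.ne
    have key : (α.rnDeriv β y).toReal
        = (a * u1).toReal * v1.toReal + (b * u2).toReal * v2.toReal := by
      rw [hw, ← hmul1, ← hmul2, ENNReal.toReal_add hfin1 hfin2]
      simp only [ENNReal.toReal_mul]
      ring
    have hts : (a * u1).toReal + (b * u2).toReal = 1 := by
      rw [← ENNReal.toReal_add (ENNReal.mul_ne_top ha_top hu1top.ne)
        (ENNReal.mul_ne_top hb_top hu2top.ne), hsum1, ENNReal.toReal_one]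
    have hcx := Real.convexOn_mul_log.2
      (Set.mem_Ici.mpr (ENNReal.toReal_nonneg : (0:ℝ) ≤ v1.toReal))
      (Set.mem_Ici.mpr (ENNReal.toReal_nonneg : (0:ℝ) ≤ v2.toReal))
      (ENNReal.toReal_nonneg : (0:ℝ) ≤ (a*u1).toReal)
      (ENNReal.toReal_nonneg : (0:ℝ) ≤ (b*u2).toReal) hts
    simp only [smul_eq_mul] at hcx ⊢
    rw [key]
    refine le_trans hcx ?_
    have ht1 : (a * u1).toReal = ε * u1.toReal := by
      rw [ENNReal.toReal_mul, ha_def, ENNReal.toReal_ofReal hε0.le]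
    have ht2 : (b * u2).toReal = (1 - ε) * u2.toReal := by
      rw [ENNReal.toReal_mul, hb_def, ENNReal.toReal_ofReal hε1'.le]
    rw [ht1, ht2]
    ring_nf
    exact le_refl _
  calc ∫ y, (α.rnDeriv β y).toReal • Real.log ((α.rnDeriv β y).toReal) ∂β
      ≤ ∫ y, (ε * ((β₁.rnDeriv β y).toReal •
          ((α₁.rnDeriv β₁ y).toReal • Real.log ((α₁.rnDeriv β₁ y).toReal)))
        + (1 - ε) * ((β₂.rnDeriv β y).toReal •
          ((α₂.rnDeriv β₂ y).toReal • Real.log ((α₂.rnDeriv β₂ y).toReal)))) ∂β :=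
      integral_mono_ae hI ((hI1.const_mul ε).add (hI2.const_mul (1 - ε))) hae
    _ = _ := by
      rw [integral_add (hI1.const_mul ε) (hI2.const_mul (1 - ε)), integral_const_mul,
        integral_const_mul]

lemma structS {X : Type*} [MeasurableSpace X] (ν νtot : Measure X)
    [IsProbabilityMeasure ν] [IsProbabilityMeasure νtot]
    (p κ : Kernel X X) [IsMarkovKernel p] [IsMarkovKernel κ]
    {c : ℝ≥0∞} (hc0 : c ≠ 0) (hc_top : c ≠ ∞) (hle : c • ν ≤ νtot)
    (hac : (ν ⊗ₘ κ) ≪ (νtot ⊗ₘ p)) :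
    ∫⁻ z, ENNReal.ofReal (-Real.log ((c * (ν ⊗ₘ p).rnDeriv (νtot ⊗ₘ p) z).toReal)) ∂(ν ⊗ₘ κ)
      ≠ ∞ := by
  have hν : ν ≪ νtot := by
    refine Measure.AbsolutelyContinuous.mk fun s hs h0 => ?_
    have := hle s
    rw [h0, Measure.smul_apply, smul_eq_mul, nonpos_iff_eq_zero] at this
    rcases mul_eq_zero.1 this with h | h
    · exact absurd h hc0
    · exact h
  set D := ν.rnDeriv νtot with hD_def
  have hDmeas : Measurable fun z : X × X => D z.1 :=
    (Measure.measurable_rnDeriv ν νtot).comp measurable_fst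
  -- identify the rnDeriv of the comp-prods
  have hwd : (νtot ⊗ₘ p).withDensity (fun z => D z.1) = ν ⊗ₘ p := by
    ext s hs
    rw [withDensity_apply _ hs, Measure.compProd_apply hs, ← lintegral_indicator hs,
      Measure.lintegral_compProd (hDmeas.indicator hs)]
    have inner : ∀ x, ∫⁻ y, s.indicator (fun z : X × X => D z.1) (x, y) ∂(p x)
        = D x * p x (Prod.mk x ⁻¹' s) := by
      intro x
      have hind : ∀ y, s.indicator (fun z : X × X => D z.1) (x, y)
          = D x * (Prod.mk x ⁻¹' s).indicator (fun _ => 1) y := by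
        intro y
        by_cases hxy : (x, y) ∈ s
        · simp [Set.indicator_of_mem hxy, Set.indicator_of_mem (Set.mem_preimage.2 hxy)]
        · simp [Set.indicator_of_notMem hxy,
            Set.indicator_of_notMem (fun h => hxy (Set.mem_preimage.1 h))]
      simp_rw [hind]
      rw [lintegral_const_mul (D x)
        (show Measurable ((Prod.mk x ⁻¹' s).indicator fun _ => (1 : ℝ≥0∞)) from
          measurable_const.indicator (measurable_prodMk_left hs)),
        lintegral_indicator (measurable_prodMk_left hs)]
      simp
    simp_rw [inner]
    rw [lintegral_rnDeriv_mul hν (Kernel.measurable_kernel_prodMk_left hs).aemeasurable]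
  have hrnd : (ν ⊗ₘ p).rnDeriv (νtot ⊗ₘ p) =ᵐ[νtot ⊗ₘ p] fun z => D z.1 :=
    (Measure.eq_rnDeriv hDmeas (Measure.MutuallySingular.zero_left)
      (by rw [zero_add, hwd])).symm
  -- rewrite the integral over the first marginal
  have step1 : ∫⁻ z, ENNReal.ofReal
        (-Real.log ((c * (ν ⊗ₘ p).rnDeriv (νtot ⊗ₘ p) z).toReal)) ∂(ν ⊗ₘ κ)
      = ∫⁻ z, ENNReal.ofReal (-Real.log ((c * D z.1).toReal)) ∂(ν ⊗ₘ κ) := by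
    refine lintegral_congr_ae ?_
    filter_upwards [hac.ae_le hrnd] with z hz
    rw [hz]
  have step2 : ∫⁻ z, ENNReal.ofReal (-Real.log ((c * D z.1).toReal)) ∂(ν ⊗ₘ κ)
      = ∫⁻ x, ENNReal.ofReal (-Real.log ((c * D x).toReal)) ∂ν := by
    rw [Measure.lintegral_compProd
      (show Measurable fun z : X × X => ENNReal.ofReal (-Real.log ((c * D z.1).toReal)) from
        (((Measure.measurable_rnDeriv ν νtot).const_mul c).ennreal_toReal.log.neg.ennreal_ofReal).comp
        measurable_fst)]
    simp [lintegral_const, measure_univ]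
  rw [step1, step2, ← lintegral_rnDeriv_mul hν
    (show Measurable fun x => ENNReal.ofReal (-Real.log ((c * D x).toReal)) from
    (((Measure.measurable_rnDeriv ν νtot).const_mul c).ennreal_toReal.log.neg.ennreal_ofReal)).aemeasurable]
  -- pointwise bound a.e. νtot
  have hD1 : ∀ᵐ x ∂νtot, c * D x ≤ 1 := by
    filter_upwards [Measure.rnDeriv_le_one_of_le hle,
      Measure.rnDeriv_smul_left_of_ne_top ν νtot hc_top] with x h1 h2
    have hx : (c • ν.rnDeriv νtot) x = c * D x := by simp [smul_eq_mul]; rfl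
    rw [← hx, ← h2]
    exact h1
  have hbound : ∀ᵐ x ∂νtot,
      D x * ENNReal.ofReal (-Real.log ((c * D x).toReal)) ≤ c⁻¹ := by
    filter_upwards [hD1] with x hx
    have hDx : D x = c⁻¹ * (c * D x) := by
      rw [← mul_assoc, ENNReal.inv_mul_cancel hc0 hc_top, one_mul]
    calc D x * ENNReal.ofReal (-Real.log ((c * D x).toReal))
        = c⁻¹ * ((c * D x) * ENNReal.ofReal (-Real.log ((c * D x).toReal))) := by
          rw [← mul_assoc, ← hDx]
      _ ≤ c⁻¹ * 1 := mul_le_mul_right (aux_ennreal_neglog _) _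
      _ = c⁻¹ := mul_one _
  have hfin : ∫⁻ x, D x * ENNReal.ofReal (-Real.log ((c * D x).toReal)) ∂νtot ≤ c⁻¹ :=
    le_trans (lintegral_mono_ae hbound) (by simp [lintegral_const, measure_univ])
  exact (lt_of_le_of_lt hfin (ENNReal.inv_lt_top.2 (pos_iff_ne_zero.2 hc0))).ne

lemma coe_mul_relEnt_ne_bot {Y : Type*} [MeasurableSpace Y] {c : ℝ} (hc : 0 < c)
    (x y : Measure Y) : (c : EReal) * relEnt x y ≠ ⊥ := by
  unfold relEnt
  split
  · rw [← EReal.coe_mul]; exact EReal.coe_ne_bot _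
  · rw [EReal.coe_mul_top_of_pos hc]; simp


end Aux

/-- Convex interpolation of stationary measure/kernel pairs: if `μq = μ`, `μ̂q̂ = μ̂`,
`μ_ε = ε μ̂ + (1-ε) μ` and `q_ε = ε f̂_ε q̂ + (1-ε) f_ε q` with densities
`f_ε = dμ/dμ_ε`, `f̂_ε = dμ̂/dμ_ε`, then `μ_ε q_ε = μ_ε` and
`H(μ_ε × q_ε | μ_ε × p) ≤ ε H(μ̂ × q̂ | μ̂ × p) + (1-ε) H(μ × q | μ × p)`. -/
theorem mixture_kernel_stationarity_and_entropy_convexity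
    {X : Type*} [MeasurableSpace X] [TopologicalSpace X] [PolishSpace X] [BorelSpace X]
    (μ μhat : Measure X) [IsProbabilityMeasure μ] [IsProbabilityMeasure μhat]
    (p q qhat : Kernel X X) [IsMarkovKernel p] [IsMarkovKernel q] [IsMarkovKernel qhat]
    (hq : μ.bind (fun x => q x) = μ)
    (hqhat : μhat.bind (fun x => qhat x) = μhat)
    (ε : ℝ) (hε0 : 0 < ε) (hε1 : ε < 1)
    (με : Measure X)
    (hμε : με = ENNReal.ofReal ε • μhat + ENNReal.ofReal (1 - ε) • μ)
    (qε : Kernel X X) [IsMarkovKernel qε]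
    (hqε : ∀ᵐ x ∂με, qε x
        = (ENNReal.ofReal ε * μhat.rnDeriv με x) • qhat x
          + (ENNReal.ofReal (1 - ε) * μ.rnDeriv με x) • q x) :
    με.bind (fun x => qε x) = με ∧
      relEnt (με ⊗ₘ qε) (με ⊗ₘ p)
        ≤ (ε : EReal) * relEnt (μhat ⊗ₘ qhat) (μhat ⊗ₘ p)
          + ((1 - ε : ℝ) : EReal) * relEnt (μ ⊗ₘ q) (μ ⊗ₘ p) := by
  have hε1' : 0 < 1 - ε := by linarith
  have ha0 : ENNReal.ofReal ε ≠ 0 := by simp [ENNReal.ofReal_eq_zero]; linarith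
  have hb0 : ENNReal.ofReal (1 - ε) ≠ 0 := by simp [ENNReal.ofReal_eq_zero]; linarith
  have ha_top : ENNReal.ofReal ε ≠ ∞ := ENNReal.ofReal_ne_top
  have hb_top : ENNReal.ofReal (1 - ε) ≠ ∞ := ENNReal.ofReal_ne_top
  haveI : IsProbabilityMeasure με := by
    constructor
    rw [hμε]
    simp only [Measure.add_apply, Measure.smul_apply, smul_eq_mul, measure_univ, mul_one]
    rw [← ENNReal.ofReal_add hε0.le hε1'.le]
    norm_num
  have hμhatac : μhat ≪ με := hμε ▸ comp_ac μhat μ ha0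
  have hμac : μ ≪ με := by rw [hμε, add_comm]; exact comp_ac μ μhat hb0
  -- generic mixing identity for lintegrals against qε
  have mix : ∀ {k : X → Set X}, Measurable (fun x => qhat x (k x)) →
      Measurable (fun x => q x (k x)) →
      ∫⁻ x, qε x (k x) ∂με
        = ENNReal.ofReal ε * ∫⁻ x, qhat x (k x) ∂μhat
          + ENNReal.ofReal (1 - ε) * ∫⁻ x, q x (k x) ∂μ := by
    intro k hk1 hk2
    have hcong : ∀ᵐ x ∂με, qε x (k x)
        = ENNReal.ofReal ε * (μhat.rnDeriv με x * qhat x (k x))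
          + ENNReal.ofReal (1 - ε) * (μ.rnDeriv με x * q x (k x)) := by
      filter_upwards [hqε] with x hx
      rw [hx]
      simp only [Measure.add_apply, Measure.smul_apply, smul_eq_mul]
      ring
    rw [lintegral_congr_ae hcong,
      lintegral_add_left (show Measurable fun x => ENNReal.ofReal ε * (μhat.rnDeriv με x * qhat x (k x)) from
        ((Measure.measurable_rnDeriv μhat με).mul hk1).const_mul _),
      lintegral_const_mul _ (show Measurable fun x => μhat.rnDeriv με x * qhat x (k x) from
        (Measure.measurable_rnDeriv μhat με).mul hk1),
      lintegral_const_mul _ (show Measurable fun x => μ.rnDeriv με x * q x (k x) from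
        (Measure.measurable_rnDeriv μ με).mul hk2),
      lintegral_rnDeriv_mul hμhatac hk1.aemeasurable,
      lintegral_rnDeriv_mul hμac hk2.aemeasurable]
  constructor
  · -- stationarity
    ext s hs
    rw [Measure.bind_apply hs (Kernel.measurable qε).aemeasurable,
      mix (Kernel.measurable_coe qhat hs) (Kernel.measurable_coe q hs),
      ← Measure.bind_apply hs (Kernel.measurable qhat).aemeasurable,
      ← Measure.bind_apply hs (Kernel.measurable q).aemeasurable, hqhat, hq]
    rw [hμε]
    simp [Measure.add_apply, Measure.smul_apply, smul_eq_mul]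
  · -- entropy inequality
    have hF2 : με ⊗ₘ qε
        = ENNReal.ofReal ε • (μhat ⊗ₘ qhat) + ENNReal.ofReal (1 - ε) • (μ ⊗ₘ q) := by
      ext s hs
      rw [Measure.compProd_apply hs,
        mix (Kernel.measurable_kernel_prodMk_left hs) (Kernel.measurable_kernel_prodMk_left hs),
        Measure.add_apply, Measure.smul_apply, Measure.smul_apply, smul_eq_mul, smul_eq_mul,
        Measure.compProd_apply hs, Measure.compProd_apply hs]
    have hF1 : με ⊗ₘ p
        = ENNReal.ofReal ε • (μhat ⊗ₘ p) + ENNReal.ofReal (1 - ε) • (μ ⊗ₘ p) := by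
      rw [hμε, Measure.compProd_add_left, Measure.compProd_smul_left,
        Measure.compProd_smul_left]
    by_cases h1 : (μhat ⊗ₘ qhat) ≪ (μhat ⊗ₘ p)
    swap
    · have htop : relEnt (μhat ⊗ₘ qhat) (μhat ⊗ₘ p) = ⊤ := by
        unfold relEnt; rw [if_neg h1]
      rw [htop, EReal.coe_mul_top_of_pos hε0,
        EReal.top_add_of_ne_bot (coe_mul_relEnt_ne_bot hε1' _ _)]
      exact le_top
    by_cases h2 : (μ ⊗ₘ q) ≪ (μ ⊗ₘ p)
    swap
    · have htop : relEnt (μ ⊗ₘ q) (μ ⊗ₘ p) = ⊤ := by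
        unfold relEnt; rw [if_neg h2]
      rw [htop, EReal.coe_mul_top_of_pos hε1',
        EReal.add_top_of_ne_bot (coe_mul_relEnt_ne_bot hε0 _ _)]
      exact le_top
    have hle1 : ENNReal.ofReal ε • μhat ≤ με := by
      rw [hμε]; exact le_add_of_nonneg_right (Measure.zero_le _)
    have hle2 : ENNReal.ofReal (1 - ε) • μ ≤ με := by
      rw [hμε]; exact le_add_of_nonneg_left (Measure.zero_le _)
    have hac1 : (μhat ⊗ₘ qhat) ≪ (με ⊗ₘ p) :=
      h1.trans (hF1 ▸ comp_ac (μhat ⊗ₘ p) (μ ⊗ₘ p) ha0)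
    have hac2 : (μ ⊗ₘ q) ≪ (με ⊗ₘ p) := by
      refine h2.trans ?_
      rw [hF1, add_comm]
      exact comp_ac (μ ⊗ₘ p) (μhat ⊗ₘ p) hb0
    exact relEnt_mixture_le (μhat ⊗ₘ qhat) (μ ⊗ₘ q) (μhat ⊗ₘ p) (μ ⊗ₘ p)
      (με ⊗ₘ qε) (με ⊗ₘ p) hε0 hε1 hF2 hF1 h1 h2
      (structS μhat με p qhat ha0 ha_top hle1 hac1)
      (structS μ με p q hb0 hb_top hle2 hac2)
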